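/- The ℤ²-action ω on Z = X × Y × G generated by the commuting homeomorphisms φ̃ and ψ̃ is minimal: the only nonempty closed subset of Z that is invariant under both φ̃ and ψ̃ is Z itself (equivalently, every orbit under the group of homeomorphisms generated by φ̃ and ψ̃ is dense in Z). -/

import Mathlib

/-- X is a Cantor set: nonempty, compact, metrizable, totally disconnected, and
without isolated points. -/
def IsCantor (X : Type*) [TopologicalSpace X] : Prop :=
  Nonempty X ∧ CompactSpace X ∧ TopologicalSpace.MetrizableSpace X ∧
    TotallyDisconnectedSpace X ∧ Perfect (Set.univ : Set X)

/-- A homeomorphism is minimal if every (two-sided) orbit is dense. -/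
def IsMinimalHomeo {X : Type*} [TopologicalSpace X] (φ : X ≃ₜ X) : Prop :=
  ∀ x : X, Dense (Set.range fun k : ℤ => (φ.toEquiv ^ k) x)

variable {X Y G : Type*} [TopologicalSpace X] [TopologicalSpace Y]
  [TopologicalSpace G] [CommGroup G] [IsTopologicalGroup G]

/-- The skew product homeomorphism φ×ξ of X × G, (φ×ξ)(x,g) = (φ(x), gξ(x)).
A cocycle ξ is non-degenerate when this homeomorphism is minimal. -/
def skewProd (φ : X ≃ₜ X) (ξ : C(X, G)) : (X × G) ≃ₜ (X × G) where
  toFun z := (φ z.1, z.2 * ξ z.1)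
  invFun z := (φ.symm z.1, z.2 * (ξ (φ.symm z.1))⁻¹)
  left_inv z := by simp
  right_inv z := by simp
  continuous_toFun := by fun_prop
  continuous_invFun := by fun_prop

/-- The homeomorphism φ̃(x,y,g) = (φ(x), y, gξ(x)) of Z = X × Y × G. -/
def phiTilde (φ : X ≃ₜ X) (ξ : C(X, G)) : (X × Y × G) ≃ₜ (X × Y × G) where
  toFun z := (φ z.1, z.2.1, z.2.2 * ξ z.1)
  invFun z := (φ.symm z.1, z.2.1, z.2.2 * (ξ (φ.symm z.1))⁻¹)
  left_inv z := by simp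
  right_inv z := by simp
  continuous_toFun := by fun_prop
  continuous_invFun := by fun_prop

/-- The homeomorphism ψ̃(x,y,g) = (x, ψ(y), gη(y)) of Z = X × Y × G. -/
def psiTilde (ψ : Y ≃ₜ Y) (η : C(Y, G)) : (X × Y × G) ≃ₜ (X × Y × G) where
  toFun z := (z.1, ψ z.2.1, z.2.2 * η z.2.1)
  invFun z := (z.1, ψ.symm z.2.1, z.2.2 * (η (ψ.symm z.2.1))⁻¹)
  left_inv z := by simp
  right_inv z := by simp
  continuous_toFun := by fun_prop
  continuous_invFun := by fun_prop

private lemma pow_apply_succ' {α : Type*} (e : Equiv.Perm α) (n : ℤ) (z : α) :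
    (e ^ (n + 1)) z = (e ^ n) (e z) := by
  rw [zpow_add_one]; rfl

private lemma pow_apply_pred' {α : Type*} (e : Equiv.Perm α) (n : ℤ) (z : α) :
    (e ^ (n - 1)) z = (e ^ n) (e.symm z) := by
  rw [zpow_sub_one]; rfl

private lemma zpow_mem_of_image_eq {α : Type*} (e : Equiv.Perm α) (F : Set α)
    (h : e '' F = F) : ∀ m : ℤ, ∀ z ∈ F, (e ^ m) z ∈ F := by
  have h1 : ∀ z ∈ F, e z ∈ F := fun z hz => h ▸ Set.mem_image_of_mem e hz
  have h2 : ∀ z ∈ F, e.symm z ∈ F := by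
    intro z hz
    rw [← h] at hz
    obtain ⟨w, hw, rfl⟩ := hz
    simpa using hw
  intro m
  induction m using Int.induction_on with
  | zero => simpa using fun z hz => hz
  | succ n ih =>
      intro z hz
      rw [pow_apply_succ']
      exact ih _ (h1 _ hz)
  | pred n ih =>
      intro z hz
      rw [pow_apply_pred']
      exact ih _ (h2 _ hz)

private lemma psiTilde_pow {X Y G : Type} [TopologicalSpace X] [TopologicalSpace Y]
    [TopologicalSpace G] [CommGroup G] [IsTopologicalGroup G]
    (ψ : Y ≃ₜ Y) (η : C(Y, G)) (m : ℤ) :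
    ∀ z : X × Y × G,
      ((psiTilde ψ η).toEquiv ^ m) z = (z.1, ((skewProd ψ η).toEquiv ^ m) z.2) := by
  induction m using Int.induction_on with
  | zero => intro z; simp
  | succ n ih =>
      intro z
      rw [pow_apply_succ', ih, pow_apply_succ']
      rfl
  | pred n ih =>
      intro z
      rw [pow_apply_pred', ih, pow_apply_pred']
      rfl

private lemma phiTilde_pow {X Y G : Type} [TopologicalSpace X] [TopologicalSpace Y]
    [TopologicalSpace G] [CommGroup G] [IsTopologicalGroup G]
    (φ : X ≃ₜ X) (ξ : C(X, G)) (m : ℤ) :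
    ∀ z : X × Y × G,
      ((phiTilde φ ξ).toEquiv ^ m) z =
        ((((skewProd φ ξ).toEquiv ^ m) (z.1, z.2.2)).1, z.2.1,
          (((skewProd φ ξ).toEquiv ^ m) (z.1, z.2.2)).2) := by
  induction m using Int.induction_on with
  | zero => intro z; simp
  | succ n ih =>
      intro z
      rw [pow_apply_succ', ih, pow_apply_succ']
      rfl
  | pred n ih =>
      intro z
      rw [pow_apply_pred', ih, pow_apply_pred']
      rfl

/-- The ℤ²-action on Z = X × Y × G generated by φ̃ and ψ̃ is minimal: the only nonempty
closed subset of Z invariant under both φ̃ and ψ̃ is Z itself. -/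
theorem statement16
    (X Y G : Type) [TopologicalSpace X] [TopologicalSpace Y]
    [TopologicalSpace G] [DiscreteTopology G] [CommGroup G] [IsTopologicalGroup G] [Fintype G]
    (hX : IsCantor X) (hY : IsCantor Y)
    (φ : X ≃ₜ X) (ψ : Y ≃ₜ Y)
    (hφ : IsMinimalHomeo φ) (hψ : IsMinimalHomeo ψ)
    (ξ : C(X, G)) (η : C(Y, G))
    (hξ : IsMinimalHomeo (skewProd φ ξ))
    (hη : IsMinimalHomeo (skewProd ψ η)) :
    ∀ F : Set (X × Y × G), IsClosed F → F.Nonempty →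
      (phiTilde φ ξ) '' F = F → (psiTilde ψ η) '' F = F → F = Set.univ := by
  intro F hF hne hφF hψF
  -- Step A: if z ∈ F then {z.1} × (Y × G) ⊆ F, using minimality of skewProd ψ η.
  have stepA : ∀ z ∈ F, ∀ w : Y × G, ((z.1, w) : X × Y × G) ∈ F := by
    intro z hz w
    have horb : Set.range (fun m : ℤ => ((psiTilde ψ η).toEquiv ^ m) z) ⊆ F := by
      rintro _ ⟨m, rfl⟩
      exact zpow_mem_of_image_eq _ F hψF m z hz
    have hcont : Continuous (fun w : Y × G => ((z.1, w) : X × Y × G)) := by fun_prop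
    have hdense := hη z.2
    have h1 : ((z.1, w) : X × Y × G) ∈
        (fun w : Y × G => ((z.1, w) : X × Y × G)) ''
          closure (Set.range fun k : ℤ => ((skewProd ψ η).toEquiv ^ k) z.2) := by
      rw [hdense.closure_eq]
      exact ⟨w, trivial, rfl⟩
    have h2 := image_closure_subset_closure_image (s := Set.range fun k : ℤ =>
        ((skewProd ψ η).toEquiv ^ k) z.2) hcont h1
    rw [← Set.range_comp] at h2
    have heq : ((fun w : Y × G => ((z.1, w) : X × Y × G)) ∘
        fun k : ℤ => ((skewProd ψ η).toEquiv ^ k) z.2) =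
        fun m : ℤ => ((psiTilde ψ η).toEquiv ^ m) z := by
      funext m
      exact (psiTilde_pow ψ η m z).symm
    rw [heq] at h2
    exact hF.closure_subset_iff.mpr horb h2
  -- Step B: if z ∈ F then X × {z.2.1} × G ⊆ F, using minimality of skewProd φ ξ.
  have stepB : ∀ z ∈ F, ∀ w : X × G, ((w.1, z.2.1, w.2) : X × Y × G) ∈ F := by
    intro z hz w
    have horb : Set.range (fun m : ℤ => ((phiTilde φ ξ).toEquiv ^ m) z) ⊆ F := by
      rintro _ ⟨m, rfl⟩
      exact zpow_mem_of_image_eq _ F hφF m z hz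
    have hcont : Continuous (fun w : X × G => ((w.1, z.2.1, w.2) : X × Y × G)) := by
      fun_prop
    have hdense := hξ (z.1, z.2.2)
    have h1 : ((w.1, z.2.1, w.2) : X × Y × G) ∈
        (fun w : X × G => ((w.1, z.2.1, w.2) : X × Y × G)) ''
          closure (Set.range fun k : ℤ => ((skewProd φ ξ).toEquiv ^ k) (z.1, z.2.2)) := by
      rw [hdense.closure_eq]
      exact ⟨w, trivial, rfl⟩
    have h2 := image_closure_subset_closure_image (s := Set.range fun k : ℤ =>
        ((skewProd φ ξ).toEquiv ^ k) (z.1, z.2.2)) hcont h1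
    rw [← Set.range_comp] at h2
    have heq : ((fun w : X × G => ((w.1, z.2.1, w.2) : X × Y × G)) ∘
        fun k : ℤ => ((skewProd φ ξ).toEquiv ^ k) (z.1, z.2.2)) =
        fun m : ℤ => ((phiTilde φ ξ).toEquiv ^ m) z := by
      funext m
      exact (phiTilde_pow φ ξ m z).symm
    rw [heq] at h2
    exact hF.closure_subset_iff.mpr horb h2
  obtain ⟨z0, hz0⟩ := hne
  apply Set.eq_univ_of_forall
  intro z
  have h1 : ((z0.1, z.2.1, (1 : G)) : X × Y × G) ∈ F := stepA z0 hz0 (z.2.1, 1)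
  have h2 := stepB _ h1 (z.1, z.2.2)
  exact h2
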